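/- In the neutral case σ = 1, the coupling map Ψ_H is non-decreasing with respect to the componentwise order on distances: for all d, e ∈ {0,…,ℓ}^m with d(i) ≤ e(i) for every i ∈ {1,…,m}, and every r ∈ ℛ, one has Ψ_H(d,r)(i) ≤ Ψ_H(e,r)(i) for every i ∈ {1,…,m}. -/

import Mathlib

open Finset

/-- Mutation coupling map `ℳ_H(b, u₁,…,u_ℓ)`. -/
noncomputable def McoupH (κ ℓ : ℕ) (q : ℝ) (b : ℕ) (u : Fin ℓ → ℝ) : ℕ :=
  b - (univ.filter fun k : Fin ℓ => (k : ℕ) < b ∧ u k < q / ((κ : ℝ) - 1)).card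
    + (univ.filter fun k : Fin ℓ => b ≤ (k : ℕ) ∧ 1 - q < u k).card

/-- Neutral selection map: for `s ∈ [0,1)`, the unique (0-indexed) `i` with
`i/m ≤ s < (i+1)/m`, i.e. `⌊m·s⌋`. -/
noncomputable def SHneutral (m : ℕ) [NeZero m] (s : ℝ) : Fin m :=
  ⟨min (⌊(m : ℝ) * s⌋).toNat (m - 1), by
    have := Nat.pos_of_ne_zero (NeZero.ne m); omega⟩

/-- Coupling map `Ψ_H` of the distance process in the neutral case `σ = 1`.
The random input `r` is a matrix in `ℛ = [0,1)^{m×(ℓ+1)}`: column `0` drives the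
selection, columns `1,…,ℓ` drive the mutations. -/
noncomputable def PsiH (κ ℓ m : ℕ) [NeZero m] (q : ℝ)
    (d : Fin m → ℕ) (r : Fin m → Fin (ℓ + 1) → ℝ) : Fin m → ℕ :=
  fun i => McoupH κ ℓ q (d (SHneutral m (r i 0))) (fun j => r i j.succ)


lemma McoupH_aux_step (κ ℓ : ℕ) (q : ℝ) (hpq : q / ((κ : ℝ) - 1) < 1 - q)
    (b : ℕ) (hb : b < ℓ) (u : Fin ℓ → ℝ) :
    (b - (univ.filter fun k : Fin ℓ => (k : ℕ) < b ∧ u k < q / ((κ : ℝ) - 1)).card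
      + (univ.filter fun k : Fin ℓ => b ≤ (k : ℕ) ∧ 1 - q < u k).card)
    ≤ (b + 1 - (univ.filter fun k : Fin ℓ => (k : ℕ) < b + 1 ∧ u k < q / ((κ : ℝ) - 1)).card
      + (univ.filter fun k : Fin ℓ => b + 1 ≤ (k : ℕ) ∧ 1 - q < u k).card) := by
  set p : ℝ := q / ((κ : ℝ) - 1) with hp
  set k0 : Fin ℓ := ⟨b, hb⟩ with hk0
  have hk0v : (k0 : ℕ) = b := rfl
  have hA : (univ.filter fun k : Fin ℓ => (k : ℕ) < b + 1 ∧ u k < p)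
      = (univ.filter fun k : Fin ℓ => (k : ℕ) < b ∧ u k < p)
        ∪ (univ.filter fun k : Fin ℓ => k = k0 ∧ u k < p) := by
    ext k
    simp only [mem_filter, mem_union, mem_univ, true_and, Fin.ext_iff, hk0v]
    by_cases h : u k < p <;> simp [h] <;> omega
  have hAdisj : Disjoint (univ.filter fun k : Fin ℓ => (k : ℕ) < b ∧ u k < p)
      (univ.filter fun k : Fin ℓ => k = k0 ∧ u k < p) := by
    rw [Finset.disjoint_left]
    intro k hk1 hk2
    simp only [mem_filter, mem_univ, true_and, Fin.ext_iff, hk0v] at hk1 hk2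
    omega
  have hB : (univ.filter fun k : Fin ℓ => b ≤ (k : ℕ) ∧ 1 - q < u k)
      = (univ.filter fun k : Fin ℓ => b + 1 ≤ (k : ℕ) ∧ 1 - q < u k)
        ∪ (univ.filter fun k : Fin ℓ => k = k0 ∧ 1 - q < u k) := by
    ext k
    simp only [mem_filter, mem_union, mem_univ, true_and, Fin.ext_iff, hk0v]
    by_cases h : 1 - q < u k <;> simp [h] <;> omega
  have hBdisj : Disjoint (univ.filter fun k : Fin ℓ => b + 1 ≤ (k : ℕ) ∧ 1 - q < u k)
      (univ.filter fun k : Fin ℓ => k = k0 ∧ 1 - q < u k) := by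
    rw [Finset.disjoint_left]
    intro k hk1 hk2
    simp only [mem_filter, mem_univ, true_and, Fin.ext_iff, hk0v] at hk1 hk2
    omega
  have hsingle : ∀ (P : Fin ℓ → Prop) [DecidablePred P],
      (univ.filter fun k : Fin ℓ => k = k0 ∧ P k).card = if P k0 then 1 else 0 := by
    intro P _
    split_ifs with h
    · rw [show (univ.filter fun k : Fin ℓ => k = k0 ∧ P k) = {k0} by
        ext k; simp only [mem_filter, mem_univ, true_and, mem_singleton]
        constructor
        · rintro ⟨rfl, _⟩; rfl
        · rintro rfl; exact ⟨rfl, h⟩]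
      simp
    · rw [Finset.card_eq_zero]
      ext k
      simp only [mem_filter, mem_univ, true_and, notMem_empty, iff_false, not_and]
      rintro rfl; exact h
  have hcardA := Finset.card_union_of_disjoint hAdisj
  have hcardB := Finset.card_union_of_disjoint hBdisj
  rw [← hA] at hcardA
  rw [← hB] at hcardB
  rw [hsingle] at hcardA hcardB
  -- A(b) ≤ b
  have hAle : (univ.filter fun k : Fin ℓ => (k : ℕ) < b ∧ u k < p).card ≤ b := by
    calc (univ.filter fun k : Fin ℓ => (k : ℕ) < b ∧ u k < p).card
        ≤ (Finset.range b).card :=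
          Finset.card_le_card_of_injOn (fun k : Fin ℓ => (k : ℕ))
            (fun k hk => by
              simp only [Finset.mem_coe, mem_filter, mem_univ, true_and] at hk
              simp [hk.1])
            (Fin.val_injective.injOn)
      _ = b := Finset.card_range b
  -- exclusivity
  have hexcl : ¬ (u k0 < p ∧ 1 - q < u k0) := by
    rintro ⟨h1, h2⟩
    linarith
  have hsum : (if u k0 < p then 1 else 0) + (if 1 - q < u k0 then 1 else 0) ≤ 1 := by
    split_ifs with h1 h2 <;> first | omega | exact absurd ⟨h1, h2⟩ hexcl
  rw [hcardA, hcardB]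
  omega

lemma McoupH_mono (κ ℓ : ℕ) (q : ℝ) (hpq : q / ((κ : ℝ) - 1) < 1 - q)
    (b b' : ℕ) (hbb : b ≤ b') (hb' : b' ≤ ℓ) (u : Fin ℓ → ℝ) :
    McoupH κ ℓ q b u ≤ McoupH κ ℓ q b' u := by
  induction b' with
  | zero =>
    have : b = 0 := by omega
    subst this
    exact le_refl _
  | succ c ih =>
    rcases Nat.lt_or_ge b (c + 1) with h | h
    · calc McoupH κ ℓ q b u ≤ McoupH κ ℓ q c u := ih (by omega) (by omega)
        _ ≤ McoupH κ ℓ q (c + 1) u := McoupH_aux_step κ ℓ q hpq c (by omega) u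
    · have : b = c + 1 := by omega
      subst this
      exact le_refl _

/-- In the neutral case `σ = 1`, the coupling map `Ψ_H` is non-decreasing with
respect to the componentwise order on distances. -/
theorem PsiH_monotone (κ ℓ m : ℕ) (hκ : 2 ≤ κ) (hℓ : 1 ≤ ℓ) [NeZero m]
    (q : ℝ) (hq0 : 0 < q) (hq1 : q < 1 - 1 / κ)
    (d e : Fin m → ℕ) (hd : ∀ i, d i ≤ ℓ) (he : ∀ i, e i ≤ ℓ)
    (hde : ∀ i, d i ≤ e i)
    (r : Fin m → Fin (ℓ + 1) → ℝ) (hr : ∀ i j, 0 ≤ r i j ∧ r i j < 1) :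
    ∀ i, PsiH κ ℓ m q d r i ≤ PsiH κ ℓ m q e r i := by
  have hpq : q / ((κ : ℝ) - 1) < 1 - q := by
    have hκR : (2 : ℝ) ≤ (κ : ℝ) := by exact_mod_cast hκ
    have hκpos : (0 : ℝ) < (κ : ℝ) := by linarith
    have h1 : q * (κ : ℝ) < (κ : ℝ) - 1 := by
      have h := mul_lt_mul_of_pos_right hq1 hκpos
      have h2 : (1 - 1 / (κ : ℝ)) * κ = κ - 1 := by field_simp
      linarith
    rw [div_lt_iff₀ (by linarith : (0 : ℝ) < (κ : ℝ) - 1)]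
    nlinarith
  intro i
  unfold PsiH
  exact McoupH_mono κ ℓ q hpq _ _ (hde _) (he _) _
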